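/- Fix $0<p<1/2$ and $n$. The Courtade–Kumar conjecture for balanced functions ($I(f(Y);X)\leq 1-h(p)$ for all balanced $f:\{0,1\}^n\to\{0,1\}$) holds if and only if the symmetrized Li–Médard conjecture holds ($N^{\mathsf{sym}}_\alpha(f)\leq N^{\mathsf{sym}}_\alpha(f_0)$ for all balanced $f$ and all $\alpha\in[1,2]$). -/

import Mathlib

open Finset Real Filter
open Topology

/-- The noise operator `T_p` applied to a Boolean function on the Hamming cube. -/
noncomputable def Tp (n : ℕ) (p : ℝ) (f : (Fin n → Bool) → Bool) (x : Fin n → Bool) : ℝ :=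
  ∑ y : Fin n → Bool,
    p ^ hammingDist x y * (1 - p) ^ (n - hammingDist x y) * (if f y then 1 else 0)

/-- A Boolean function is balanced if it takes the value 1 exactly half the time. -/
def IsBalanced (n : ℕ) (f : (Fin n → Bool) → Bool) : Prop :=
  ∑ y : Fin n → Bool, (if f y then (1 : ℝ) else 0) = 2 ^ n / 2

/-- Dictatorship function on coordinate `i`. -/
def dict (n : ℕ) (i : Fin n) : (Fin n → Bool) → Bool := fun y => y i

/-- `N_α(f) = ∑_x (T_p f x)^α` (real power). -/
noncomputable def Nal (n : ℕ) (p : ℝ) (f : (Fin n → Bool) → Bool) (α : ℝ) : ℝ :=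
  ∑ x : Fin n → Bool, Tp n p f x ^ α

/-- Symmetrized version `N^sym_α(f) = ∑_x (T_p f x)^α + (1 - T_p f x)^α`. -/
noncomputable def Nsym (n : ℕ) (p : ℝ) (f : (Fin n → Bool) → Bool) (α : ℝ) : ℝ :=
  ∑ x : Fin n → Bool, (Tp n p f x ^ α + (1 - Tp n p f x) ^ α)

/-- Binary entropy function, in bits. -/
noncomputable def binEnt (t : ℝ) : ℝ := -(t * Real.logb 2 t) - (1 - t) * Real.logb 2 (1 - t)

/-- Mutual information `I(f(Y); X)` for a balanced Boolean function `f`,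
with `X` uniform on the cube and `Y` the output of a BSC(p) on input `X`. -/
noncomputable def MI (n : ℕ) (p : ℝ) (f : (Fin n → Bool) → Bool) : ℝ :=
  1 - ((2 : ℝ) ^ n)⁻¹ * ∑ x : Fin n → Bool, binEnt (Tp n p f x)

lemma keyExp (a θ : ℝ) (ha : 0 ≤ a) (ha1 : a ≤ 1) (hθ : 0 ≤ θ) :
    a * (exp (2*θ) + exp (2*a*θ)) * (2*θ) ≤ (exp (2*a*θ) - 1) * (1 + exp (2*θ)) := by
  have key : a * θ * cosh ((1-a)*θ) ≤ sinh (a*θ) * cosh θ := by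
    have h1 : cosh ((1-a)*θ) ≤ cosh θ := by
      rw [Real.cosh_le_cosh, abs_of_nonneg (by nlinarith), abs_of_nonneg hθ]
      nlinarith
    have h2 : a * θ ≤ sinh (a*θ) := Real.self_le_sinh_iff.2 (by positivity)
    calc a * θ * cosh ((1-a)*θ) ≤ a * θ * cosh θ :=
          mul_le_mul_of_nonneg_left h1 (by positivity)
      _ ≤ sinh (a*θ) * cosh θ := mul_le_mul_of_nonneg_right h2 (Real.cosh_pos θ).le
  have hmul := mul_le_mul_of_nonneg_right key (by positivity : (0:ℝ) ≤ 4 * (exp θ * exp (a*θ)))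
  have hE := Real.exp_pos θ
  have hA := Real.exp_pos (a*θ)
  have e1 : exp (2*θ) = exp θ * exp θ := by rw [← Real.exp_add]; ring_nf
  have e2 : exp (2*a*θ) = exp (a*θ) * exp (a*θ) := by rw [← Real.exp_add]; ring_nf
  have e3 : exp ((1-a)*θ) = exp θ / exp (a*θ) := by rw [← Real.exp_sub]; ring_nf
  have e4 : exp (-((1-a)*θ)) = exp (a*θ) / exp θ := by rw [← Real.exp_sub]; ring_nf
  have e5 : exp (-(a*θ)) = 1 / exp (a*θ) := by rw [Real.exp_neg]; ring
  have e6 : exp (-θ) = 1 / exp θ := by rw [Real.exp_neg]; ring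
  calc a * (exp (2*θ) + exp (2*a*θ)) * (2*θ)
      = a * θ * cosh ((1-a)*θ) * (4 * (exp θ * exp (a*θ))) := by
        simp only [Real.cosh_eq, e1, e2, e3, e4]
        field_simp
        ring
    _ ≤ sinh (a*θ) * cosh θ * (4 * (exp θ * exp (a*θ))) := hmul
    _ = (exp (2*a*θ) - 1) * (1 + exp (2*θ)) := by
        simp only [Real.sinh_eq, Real.cosh_eq, e1, e2, e5, e6]
        field_simp
        ring

lemma keyK' (α t : ℝ) (hα1 : 1 ≤ α) (hα2 : α ≤ 2) (ht : 0 < t) (ht2 : t ≤ 1/2) :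
    (α-1) * ((1-t) * t^(α-1) + t * (1-t)^(α-1)) * (log (1-t) - log t)
      ≤ (1-t)^(α-1) - t^(α-1) := by
  have h1t : 0 < 1 - t := by linarith
  set a := α - 1 with hadef
  set u := log t with hu
  set v := log (1-t) with hv
  have heu : exp u = t := Real.exp_log ht
  have hev : exp v = 1 - t := Real.exp_log h1t
  have huv : u ≤ v := Real.log_le_log ht (by linarith)
  have hθ : 0 ≤ (v - u)/2 := by linarith
  have hK := keyExp a ((v-u)/2) (by simp [hadef]; linarith) (by simp [hadef]; linarith) hθ
  have h2θ : 2*((v-u)/2) = v - u := by ring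
  have h2aθ : 2*a*((v-u)/2) = v*a - u*a := by ring
  rw [h2θ, h2aθ, Real.exp_sub, Real.exp_sub, heu, hev] at hK
  rw [Real.rpow_def_of_pos ht, Real.rpow_def_of_pos h1t, ← hu, ← hv]
  have hP := Real.exp_pos (u*a)
  have hQ := Real.exp_pos (v*a)
  have ht' : t ≠ 0 := ne_of_gt ht
  have hP' : exp (u*a) ≠ 0 := ne_of_gt hP
  have hcomb : ((1-t)/t + exp (v*a)/exp (u*a)) * (t * exp (u*a))
      = (1-t) * exp (u*a) + t * exp (v*a) := by field_simp
  have hcomb2 : ((exp (v*a)/exp (u*a) - 1) * (1 + (1-t)/t)) * (t * exp (u*a))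
      = exp (v*a) - exp (u*a) := by
    have hone : 1 + (1-t)/t = 1/t := by field_simp; ring
    have htwo : exp (v*a)/exp (u*a) - 1 = (exp (v*a) - exp (u*a))/exp (u*a) := by
      field_simp
    rw [hone, htwo]
    field_simp
  have e1 : a * ((1-t) * exp (u*a) + t * exp (v*a)) * (v - u)
      = (a * ((1-t)/t + exp (v*a)/exp (u*a)) * (v-u)) * (t * exp (u*a)) := by
    rw [← hcomb]; ring
  have e2 : exp (v*a) - exp (u*a)
      = ((exp (v*a)/exp (u*a) - 1) * (1 + (1-t)/t)) * (t * exp (u*a)) := hcomb2.symm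
  have := mul_le_mul_of_nonneg_right hK (by positivity : (0:ℝ) ≤ t * exp (u*a))
  calc a * ((1-t) * exp (u*a) + t * exp (v*a)) * (v - u)
      = (a * ((1-t)/t + exp (v*a)/exp (u*a)) * (v-u)) * (t * exp (u*a)) := e1
    _ ≤ ((exp (v*a)/exp (u*a) - 1) * (1 + (1-t)/t)) * (t * exp (u*a)) := this
    _ = exp (v*a) - exp (u*a) := e2.symm

noncomputable def Hent (t : ℝ) : ℝ := -(t * Real.log t) - (1 - t) * Real.log (1 - t)

lemma hasDerivAt_Hent {t : ℝ} (h0 : 0 < t) (h1 : t < 1) :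
    HasDerivAt Hent (Real.log (1-t) - Real.log t) t := by
  have hin : HasDerivAt (fun x : ℝ => 1 - x) (-1) t := (hasDerivAt_id t).const_sub 1
  have h2 : HasDerivAt (fun x : ℝ => (1-x) * Real.log (1-x)) ((Real.log (1-t) + 1) * (-1)) t :=
    (Real.hasDerivAt_mul_log (by linarith : (1:ℝ)-t ≠ 0)).comp t hin
  have h3 := ((Real.hasDerivAt_mul_log h0.ne').neg).sub h2
  refine h3.congr_deriv ?_
  ring

lemma hasDerivAt_phi (α : ℝ) {t : ℝ} (h0 : 0 < t) (h1 : t < 1) :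
    HasDerivAt (fun s : ℝ => s ^ α + (1-s) ^ α)
      (α * t^(α-1) - α * (1-t)^(α-1)) t := by
  have hin : HasDerivAt (fun x : ℝ => 1 - x) (-1) t := (hasDerivAt_id t).const_sub 1
  have h2 : HasDerivAt (fun s : ℝ => (1-s) ^ α) (α * (1-t)^(α-1) * (-1)) t :=
    (Real.hasDerivAt_rpow_const (Or.inl (by linarith : (1:ℝ)-t ≠ 0))).comp t hin
  have h3 := (Real.hasDerivAt_rpow_const (p := α) (Or.inl h0.ne')).add h2
  refine h3.congr_deriv ?_
  ring

lemma hasDerivAt_ph (α : ℝ) {t : ℝ} (h0 : 0 < t) (h1 : t < 1) :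
    HasDerivAt (fun s : ℝ => α * s^(α-1) - α * (1-s)^(α-1))
      (α * ((α-1) * t^(α-1-1)) + α * ((α-1) * (1-t)^(α-1-1))) t := by
  have hin : HasDerivAt (fun x : ℝ => 1 - x) (-1) t := (hasDerivAt_id t).const_sub 1
  have h2 : HasDerivAt (fun s : ℝ => (1-s) ^ (α-1)) ((α-1) * (1-t)^(α-1-1) * (-1)) t :=
    (Real.hasDerivAt_rpow_const (Or.inl (by linarith : (1:ℝ)-t ≠ 0))).comp t hin
  have h3 := ((Real.hasDerivAt_rpow_const (p := α-1) (Or.inl h0.ne')).const_mul α).sub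
    (h2.const_mul α)
  refine h3.congr_deriv ?_
  ring


lemma tangent (α p : ℝ) (hα1 : 1 < α) (hα2 : α ≤ 2) (hp : 0 < p) (hp2 : p < 1/2) :
    ∃ c ≤ 0, ∀ t ∈ Set.Icc (0:ℝ) 1,
      t ^ α + (1-t) ^ α ≤ p ^ α + (1-p) ^ α + c * (Hent t - Hent p) := by
  set L : ℝ → ℝ := fun t => Real.log (1-t) - Real.log t with hLdef
  set ph : ℝ → ℝ := fun t => α * t^(α-1) - α * (1-t)^(α-1) with hphdef
  set r : ℝ → ℝ := fun t => ph t / L t with hrdef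
  set c := r p with hcdef
  have hs : ∀ t ∈ Set.Ioo (0:ℝ) (1/2), 0 < t ∧ t < 1 ∧ 0 < 1 - t ∧ 0 < L t := by
    intro t ht
    obtain ⟨h0, h2⟩ := ht
    refine ⟨h0, by linarith, by linarith, ?_⟩
    have : Real.log t < Real.log (1-t) := Real.log_lt_log h0 (by linarith)
    simp only [hLdef]; linarith
  -- derivative of r is nonpositive on Ioo 0 (1/2)
  have hrderiv : ∀ t ∈ Set.Ioo (0:ℝ) (1/2), HasDerivAt r
      (((α * ((α-1) * t^(α-1-1)) + α * ((α-1) * (1-t)^(α-1-1))) * L t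
        - ph t * (-(1-t)⁻¹ - t⁻¹)) / (L t)^2) t := by
    intro t ht
    obtain ⟨h0, h1, h1t, hL⟩ := hs t ht
    have hLd : HasDerivAt L (-(1-t)⁻¹ - t⁻¹) t := by
      have hin : HasDerivAt (fun x : ℝ => 1 - x) (-1) t := (hasDerivAt_id t).const_sub 1
      have h2 : HasDerivAt (fun x : ℝ => Real.log (1-x)) ((1-t)⁻¹ * (-1)) t :=
        (Real.hasDerivAt_log (by linarith : (1:ℝ)-t ≠ 0)).comp t hin
      have h3 := h2.sub (Real.hasDerivAt_log h0.ne')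
      refine h3.congr_deriv ?_
      ring
    exact (hasDerivAt_ph α h0 h1).div hLd hL.ne'
  have hrnonpos : ∀ t ∈ Set.Ioo (0:ℝ) (1/2), deriv r t ≤ 0 := by
    intro t ht
    obtain ⟨h0, h1, h1t, hL⟩ := hs t ht
    rw [(hrderiv t ht).deriv]
    apply div_nonpos_of_nonpos_of_nonneg _ (sq_nonneg _)
    -- numerator nonpositive
    have hk := keyK' α t hα1.le hα2 h0 ht.2.le
    have hm : (0:ℝ) < α / (t*(1-t)) := by positivity
    have hmul := mul_le_mul_of_nonneg_left hk hm.le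
    have hA : t^(α-1-1) = t^(α-1) / t := Real.rpow_sub_one h0.ne' (α-1)
    have hB : (1-t)^(α-1-1) = (1-t)^(α-1) / (1-t) := Real.rpow_sub_one h1t.ne' (α-1)
    have e1 : (α * ((α-1) * t^(α-1-1)) + α * ((α-1) * (1-t)^(α-1-1))) * L t
        = α / (t*(1-t)) * ((α-1) * ((1-t) * t^(α-1) + t * (1-t)^(α-1)) * L t) := by
      rw [hA, hB]
      field_simp
    have e2 : ph t * (-(1-t)⁻¹ - t⁻¹)
        = α / (t*(1-t)) * ((1-t)^(α-1) - t^(α-1)) := by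
      simp only [hphdef]
      field_simp
      ring
    rw [e1, e2]
    linarith
  -- r is antitone on Ioo 0 (1/2)
  have hranti : AntitoneOn r (Set.Ioo (0:ℝ) (1/2)) := by
    apply antitoneOn_of_deriv_nonpos (convex_Ioo _ _)
    · intro t ht
      exact ((hrderiv t ht).differentiableAt).continuousAt.continuousWithinAt
    · rw [interior_Ioo]
      intro t ht
      exact ((hrderiv t ht).differentiableAt).differentiableWithinAt
    · rw [interior_Ioo]
      exact hrnonpos
  have hpmem : p ∈ Set.Ioo (0:ℝ) (1/2) := ⟨hp, hp2⟩
  obtain ⟨hp0, hp1, hp1t, hLp⟩ := hs p hpmem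
  -- c ≤ 0
  have hc : c ≤ 0 := by
    apply div_nonpos_of_nonpos_of_nonneg _ hLp.le
    simp only [hphdef]
    have : p ^ (α-1) ≤ (1-p) ^ (α-1) :=
      Real.rpow_le_rpow hp.le (by linarith) (by linarith)
    nlinarith
  -- the function g
  set g : ℝ → ℝ := fun t => (p ^ α + (1-p) ^ α) + c * (Hent t - Hent p) - (t ^ α + (1-t) ^ α)
    with hgdef
  have hgcont : Continuous g := by
    have hrpow : Continuous (fun t : ℝ => t ^ α) :=
      continuous_iff_continuousAt.2
        (fun x => Real.continuousAt_rpow_const x α (Or.inr (by linarith)))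
    have hHent : Continuous Hent := by
      have := Real.continuous_mul_log
      exact (this.neg).sub (this.comp (continuous_const.sub continuous_id))
    exact (continuous_const.add (continuous_const.mul (hHent.sub continuous_const))).sub
      (hrpow.add (hrpow.comp (continuous_const.sub continuous_id)))
  have hgderiv : ∀ t ∈ Set.Ioo (0:ℝ) 1, HasDerivAt g (c * L t - ph t) t := by
    intro t ht
    have h1 := (((hasDerivAt_Hent ht.1 ht.2).sub_const (Hent p)).const_mul c).const_add
      (p ^ α + (1-p) ^ α)
    have h2 := h1.sub (hasDerivAt_phi α ht.1 ht.2)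
    exact h2
  -- monotone on [p, 1/2]
  have hmono : MonotoneOn g (Set.Icc p (1/2)) := by
    apply monotoneOn_of_deriv_nonneg (convex_Icc _ _) hgcont.continuousOn
    · intro t ht
      rw [interior_Icc] at ht
      exact ((hgderiv t ⟨by linarith [ht.1], by linarith [ht.2]⟩).differentiableAt).differentiableWithinAt
    · rw [interior_Icc]
      intro t ht
      have htIoo : t ∈ Set.Ioo (0:ℝ) (1/2) := ⟨by linarith [ht.1], ht.2⟩
      obtain ⟨h0, h1, h1t, hL⟩ := hs t htIoo
      rw [(hgderiv t ⟨h0, h1⟩).deriv]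
      have hr : r t ≤ c := hranti hpmem htIoo ht.1.le
      have : ph t = r t * L t := by
        simp only [hrdef]
        field_simp
      rw [this]
      nlinarith
  -- antitone on [0, p]
  have hanti : AntitoneOn g (Set.Icc (0:ℝ) p) := by
    apply antitoneOn_of_deriv_nonpos (convex_Icc _ _) hgcont.continuousOn
    · intro t ht
      rw [interior_Icc] at ht
      exact ((hgderiv t ⟨ht.1, by linarith [ht.2]⟩).differentiableAt).differentiableWithinAt
    · rw [interior_Icc]
      intro t ht
      have htIoo : t ∈ Set.Ioo (0:ℝ) (1/2) := ⟨ht.1, by linarith [ht.2]⟩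
      obtain ⟨h0, h1, h1t, hL⟩ := hs t htIoo
      rw [(hgderiv t ⟨h0, h1⟩).deriv]
      have hr : c ≤ r t := hranti htIoo hpmem ht.2.le
      have : ph t = r t * L t := by
        simp only [hrdef]
        field_simp
      rw [this]
      nlinarith
  have hgp : g p = 0 := by simp only [hgdef]; ring
  have hhalf : ∀ t ∈ Set.Icc (0:ℝ) (1/2), 0 ≤ g t := by
    intro t ht
    rcases le_or_gt t p with h | h
    · have := hanti ⟨ht.1, h⟩ ⟨hp.le, le_refl p⟩ h
      linarith [this]
    · have := hmono ⟨le_refl p, hp2.le⟩ ⟨by linarith, ht.2⟩ h.le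
      linarith [this]
  have hsym : ∀ t : ℝ, g (1-t) = g t := by
    intro t
    simp only [hgdef, Hent, sub_sub_cancel]
    ring
  refine ⟨c, hc, ?_⟩
  intro t ht
  have hnn : 0 ≤ g t := by
    rcases le_or_gt t (1/2) with h | h
    · exact hhalf t ⟨ht.1, h⟩
    · rw [← hsym t]
      exact hhalf (1-t) ⟨by linarith [ht.2], by linarith⟩
  simp only [hgdef] at hnn
  linarith

lemma kernel_prod (n : ℕ) (p : ℝ) (x y : Fin n → Bool) :
    p ^ hammingDist x y * (1 - p) ^ (n - hammingDist x y)
      = ∏ j : Fin n, (if x j = y j then 1-p else p) := by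
  classical
  rw [Finset.prod_ite]
  simp only [Finset.prod_const]
  have hd : (Finset.univ.filter fun j => ¬ (x j = y j)).card = hammingDist x y := by
    simp [hammingDist]
  have hc := Finset.card_filter_add_card_filter_not
    (s := (Finset.univ : Finset (Fin n))) (p := fun j => x j = y j)
  simp only [Finset.card_univ, Fintype.card_fin] at hc
  have hP : (Finset.univ.filter fun j => x j = y j).card = n - hammingDist x y := by
    omega
  rw [hd, hP, mul_comm]

lemma sum_kernel (n : ℕ) (p : ℝ) (x : Fin n → Bool) :
    ∑ y : Fin n → Bool, p ^ hammingDist x y * (1-p) ^ (n - hammingDist x y) = 1 := by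
  classical
  simp only [kernel_prod]
  rw [← Fintype.prod_sum (f := fun (j : Fin n) (b : Bool) => if x j = b then 1-p else p)]
  apply Finset.prod_eq_one
  intro j _
  cases hxj : x j <;> simp [Fintype.sum_bool, hxj] <;> ring

lemma Tp_nonneg {n : ℕ} {p : ℝ} (hp0 : 0 ≤ p) (hp1 : p ≤ 1)
    (f : (Fin n → Bool) → Bool) (x : Fin n → Bool) : 0 ≤ Tp n p f x := by
  apply Finset.sum_nonneg
  intro y _
  have h1 : (0:ℝ) ≤ 1 - p := by linarith
  have : (0:ℝ) ≤ (if f y then (1:ℝ) else 0) := by split <;> norm_num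
  positivity

lemma Tp_le_one {n : ℕ} {p : ℝ} (hp0 : 0 ≤ p) (hp1 : p ≤ 1)
    (f : (Fin n → Bool) → Bool) (x : Fin n → Bool) : Tp n p f x ≤ 1 := by
  have h1 : (0:ℝ) ≤ 1 - p := by linarith
  calc Tp n p f x ≤ ∑ y : Fin n → Bool, p ^ hammingDist x y * (1-p) ^ (n - hammingDist x y) := by
        apply Finset.sum_le_sum
        intro y _
        have h2 : (0:ℝ) ≤ p ^ hammingDist x y * (1-p)^(n - hammingDist x y) := by positivity
        have : (if f y then (1:ℝ) else 0) ≤ 1 := by split <;> norm_num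
        nlinarith
    _ = 1 := sum_kernel n p x

lemma Tp_dict (n : ℕ) (p : ℝ) (i : Fin n) (x : Fin n → Bool) :
    Tp n p (dict n i) x = if x i then 1-p else p := by
  classical
  unfold Tp dict
  have h1 : ∀ y : Fin n → Bool,
      p ^ hammingDist x y * (1-p) ^ (n - hammingDist x y) * (if y i then 1 else 0)
      = ∏ j, ((if x j = y j then 1-p else p) * (if j = i then (if y j then 1 else 0) else 1)) := by
    intro y
    rw [Finset.prod_mul_distrib, ← kernel_prod]
    congr 1
    rw [Finset.prod_ite_eq' Finset.univ i (fun j => if y j then (1:ℝ) else 0)]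
    simp
  simp only [h1]
  rw [← Fintype.prod_sum (f := fun (j : Fin n) (b : Bool) =>
    (if x j = b then 1-p else p) * (if j = i then (if b then (1:ℝ) else 0) else 1))]
  have h2 : ∀ j, (∑ b : Bool, (if x j = b then 1-p else p) * (if j = i then (if b then (1:ℝ) else 0) else 1))
      = if j = i then (if x i then 1-p else p) else 1 := by
    intro j
    rcases eq_or_ne j i with h | h
    · subst h
      cases hx : x j <;> simp [Fintype.sum_bool, hx]
    · cases hx : x j <;> simp [Fintype.sum_bool, hx, h] <;> ring
  simp only [h2]
  rw [Finset.prod_ite_eq' Finset.univ i (fun _ => if x i then 1-p else p)]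
  simp

lemma Nsym_dict (n : ℕ) (p : ℝ) (i : Fin n) (α : ℝ) :
    Nsym n p (dict n i) α = 2^n * (p^α + (1-p)^α) := by
  unfold Nsym
  have h : ∀ x : Fin n → Bool,
      Tp n p (dict n i) x ^ α + (1 - Tp n p (dict n i) x) ^ α = p^α + (1-p)^α := by
    intro x
    rw [Tp_dict]
    cases hx : x i <;> simp [hx, sub_sub_cancel] <;> ring
  rw [Finset.sum_congr rfl (fun x _ => h x), Finset.sum_const, Finset.card_univ]
  simp only [Fintype.card_fun, Fintype.card_bool, Fintype.card_fin, nsmul_eq_mul]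
  push_cast
  ring

lemma card_cube (n : ℕ) : (Finset.univ : Finset (Fin n → Bool)).card = 2^n := by
  simp [Finset.card_univ]

lemma Hent_eq (t : ℝ) : Hent t = binEnt t * Real.log 2 := by
  have h2 : Real.log 2 ≠ 0 := by
    have := Real.log_pos one_lt_two
    linarith
  unfold Hent binEnt Real.logb
  field_simp

lemma MI_iff (n : ℕ) (p : ℝ) (f : (Fin n → Bool) → Bool) :
    MI n p f ≤ 1 - binEnt p ↔ 2^n * Hent p ≤ ∑ x : Fin n → Bool, Hent (Tp n p f x) := by
  have hlog : (0:ℝ) < Real.log 2 := Real.log_pos one_lt_two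
  have hpow : (0:ℝ) < 2^n := by positivity
  have hsum : ∑ x : Fin n → Bool, Hent (Tp n p f x)
      = (∑ x : Fin n → Bool, binEnt (Tp n p f x)) * Real.log 2 := by
    rw [Finset.sum_mul]
    exact Finset.sum_congr rfl (fun x _ => Hent_eq _)
  rw [hsum, Hent_eq]
  constructor
  · intro h
    have h1 : binEnt p ≤ (2^n : ℝ)⁻¹ * ∑ x : Fin n → Bool, binEnt (Tp n p f x) := by
      unfold MI at h; linarith
    have h2 : 2^n * binEnt p ≤ ∑ x : Fin n → Bool, binEnt (Tp n p f x) := by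
      rw [inv_mul_eq_div, le_div_iff₀ hpow] at h1
      linarith
    nlinarith
  · intro h
    have h2 : 2^n * binEnt p ≤ ∑ x : Fin n → Bool, binEnt (Tp n p f x) := by
      nlinarith
    have h1 : binEnt p ≤ (2^n : ℝ)⁻¹ * ∑ x : Fin n → Bool, binEnt (Tp n p f x) := by
      rw [inv_mul_eq_div, le_div_iff₀ hpow]
      linarith
    unfold MI
    linarith

lemma Nsym_one (n : ℕ) (p : ℝ) (f : (Fin n → Bool) → Bool) : Nsym n p f 1 = 2^n := by
  unfold Nsym
  have : ∀ x : Fin n → Bool, Tp n p f x ^ (1:ℝ) + (1 - Tp n p f x) ^ (1:ℝ) = 1 := by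
    intro x
    rw [Real.rpow_one, Real.rpow_one]
    ring
  rw [Finset.sum_congr rfl (fun x _ => this x), Finset.sum_const, card_cube]
  simp

lemma balanced_ne_zero {n : ℕ} {f : (Fin n → Bool) → Bool} (hf : IsBalanced n f) : n ≠ 0 := by
  intro h
  subst h
  unfold IsBalanced at hf
  rw [Finset.sum_eq_single_of_mem (fun _ => false) (Finset.mem_univ _)
    (fun y _ hy => absurd (funext fun j => absurd j.2 (by omega)) hy)] at hf
  split at hf <;> norm_num at hf

lemma hasDerivAt_rpow_base {t : ℝ} (h0 : 0 ≤ t) :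
    HasDerivAt (fun α : ℝ => t ^ α) (t * Real.log t) 1 := by
  rcases eq_or_lt_of_le h0 with h | h
  · have hev : (fun α : ℝ => t ^ α) =ᶠ[nhds (1:ℝ)] fun _ => 0 := by
      filter_upwards [isOpen_compl_singleton.mem_nhds
        (by norm_num : (1:ℝ) ∈ ({(0:ℝ)}ᶜ : Set ℝ))] with a ha
      rw [← h, Real.zero_rpow (by simpa using ha)]
    have hc : HasDerivAt (fun _ : ℝ => (0:ℝ)) 0 1 := hasDerivAt_const 1 0
    have := hc.congr_of_eventuallyEq hev
    simpa [← h] using this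
  · have heq : (fun α : ℝ => t ^ α) = fun α => Real.exp (Real.log t * α) := by
      funext α; rw [Real.rpow_def_of_pos h]
    rw [heq]
    have h1 : HasDerivAt (fun α : ℝ => Real.log t * α) (Real.log t) 1 := by
      simpa using (hasDerivAt_id (1:ℝ)).const_mul (Real.log t)
    have := (Real.hasDerivAt_exp (Real.log t * 1)).comp 1 h1
    refine this.congr_deriv ?_
    rw [mul_one, Real.exp_log h]

/-- The Courtade–Kumar conjecture for balanced functions is equivalent to the symmetrized
Li–Médard conjecture. -/
theorem CK_iff_sym_li_medard (n : ℕ) (p : ℝ) (hp : 0 < p) (hp2 : p < 1/2) :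
    (∀ f : (Fin n → Bool) → Bool, IsBalanced n f → MI n p f ≤ 1 - binEnt p) ↔
    (∀ f : (Fin n → Bool) → Bool, IsBalanced n f → ∀ i : Fin n,
      ∀ α ∈ Set.Icc (1 : ℝ) 2, Nsym n p f α ≤ Nsym n p (dict n i) α) := by
  have hp1 : p ≤ 1 := by linarith
  constructor
  · intro hCK f hf i α hα
    obtain ⟨hα1, hα2⟩ := hα
    rcases eq_or_lt_of_le hα1 with h1 | h1
    · rw [← h1, Nsym_one, Nsym_one]
    · have hsumH : 2^n * Hent p ≤ ∑ x : Fin n → Bool, Hent (Tp n p f x) :=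
        (MI_iff n p f).mp (hCK f hf)
      obtain ⟨c, hc, htan⟩ := tangent α p h1 hα2 hp hp2
      rw [Nsym_dict]
      unfold Nsym
      have step1 : ∑ x : Fin n → Bool, (Tp n p f x ^ α + (1 - Tp n p f x) ^ α)
          ≤ ∑ x : Fin n → Bool, (p^α + (1-p)^α + c * (Hent (Tp n p f x) - Hent p)) := by
        apply Finset.sum_le_sum
        intro x _
        exact htan _ ⟨Tp_nonneg hp.le hp1 f x, Tp_le_one hp.le hp1 f x⟩
      have step2 : ∑ x : Fin n → Bool, (p^α + (1-p)^α + c * (Hent (Tp n p f x) - Hent p))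
          = 2^n * (p^α + (1-p)^α)
            + c * ((∑ x : Fin n → Bool, Hent (Tp n p f x)) - 2^n * Hent p) := by
        rw [Finset.sum_add_distrib, Finset.sum_const, card_cube, ← Finset.mul_sum,
          Finset.sum_sub_distrib, Finset.sum_const, card_cube]
        push_cast
        ring
      rw [step2] at step1
      nlinarith
  · intro hLM f hf
    have hn : n ≠ 0 := balanced_ne_zero hf
    set i : Fin n := ⟨0, Nat.pos_of_ne_zero hn⟩ with hidef
    rw [MI_iff]
    set T := Tp n p f with hTdef
    set D : ℝ → ℝ := fun α => (∑ x : Fin n → Bool, (T x ^ α + (1 - T x)^α))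
      - 2^n * (p^α + (1-p)^α) with hDdef
    have hT01 : ∀ x, 0 ≤ T x ∧ T x ≤ 1 :=
      fun x => ⟨Tp_nonneg hp.le hp1 f x, Tp_le_one hp.le hp1 f x⟩
    have hD1 : D 1 = 0 := by
      simp only [hDdef]
      have : ∀ x : Fin n → Bool, T x ^ (1:ℝ) + (1 - T x) ^ (1:ℝ) = 1 := by
        intro x
        rw [Real.rpow_one, Real.rpow_one]; ring
      rw [Finset.sum_congr rfl (fun x _ => this x), Finset.sum_const, card_cube,
        Real.rpow_one, Real.rpow_one]
      push_cast
      ring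
    have hDle : ∀ α ∈ Set.Ioc (1:ℝ) 2, D α ≤ 0 := by
      intro α hα
      have := hLM f hf i α ⟨hα.1.le, hα.2⟩
      rw [Nsym_dict] at this
      unfold Nsym at this
      simp only [hDdef, ← hTdef] at *
      linarith
    set D' : ℝ := (∑ x : Fin n → Bool, (T x * Real.log (T x) + (1 - T x) * Real.log (1 - T x)))
      - 2^n * (p * Real.log p + (1-p) * Real.log (1-p)) with hD'def
    have hDD : HasDerivAt D D' 1 := by
      have hsum : HasDerivAt (fun α : ℝ => ∑ x : Fin n → Bool, (T x ^ α + (1 - T x)^α))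
          (∑ x : Fin n → Bool, (T x * Real.log (T x) + (1 - T x) * Real.log (1 - T x))) 1 := by
        apply HasDerivAt.fun_sum
        intro x _
        exact (hasDerivAt_rpow_base (hT01 x).1).add
          (hasDerivAt_rpow_base (by linarith [(hT01 x).2] : (0:ℝ) ≤ 1 - T x))
      have hconst : HasDerivAt (fun α : ℝ => 2^n * (p^α + (1-p)^α))
          (2^n * (p * Real.log p + (1-p) * Real.log (1-p))) 1 := by
        exact ((hasDerivAt_rpow_base hp.le).add
          (hasDerivAt_rpow_base (by linarith : (0:ℝ) ≤ 1 - p))).const_mul _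
      exact hsum.sub hconst
    have hslope := hasDerivAt_iff_tendsto_slope.mp hDD
    have h2 : Tendsto (slope D 1) (𝓝[>] (1:ℝ)) (𝓝 D') :=
      hslope.mono_left (nhdsWithin_mono 1 (fun a ha => ne_of_gt ha))
    have hev : ∀ᶠ a in 𝓝[>] (1:ℝ), slope D 1 a ≤ 0 := by
      filter_upwards [Ioc_mem_nhdsGT_of_mem (by constructor <;> norm_num :
        (1:ℝ) ∈ Set.Ico (1:ℝ) 2)] with a ha
      rw [slope_def_field, hD1, sub_zero]
      exact div_nonpos_of_nonpos_of_nonneg (hDle a ha) (by linarith [ha.1])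
    have hD'le : D' ≤ 0 := le_of_tendsto h2 hev
    have e1 : ∑ x : Fin n → Bool, Hent (T x)
        = -∑ x : Fin n → Bool, (T x * Real.log (T x) + (1 - T x) * Real.log (1 - T x)) := by
      rw [← Finset.sum_neg_distrib]
      apply Finset.sum_congr rfl
      intro x _
      unfold Hent
      ring
    have e2 : Hent p = -(p * Real.log p + (1-p) * Real.log (1-p)) := by
      unfold Hent; ring
    rw [e1, e2]
    simp only [hD'def] at hD'le
    nlinarith
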